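/- Let d ≥ k ≥ 1, let H be a d×d real matrix with det H ≠ 0, let N be a (d−k)×d real matrix and D a k×d real matrix such that N D^t = 0 and the d×d matrix whose first d−k columns are the columns of N^t and whose last k columns are the columns of D^t is nonsingular. Then det(N H N^t) ≠ 0 if and only if det(D H^{−1} D^t) ≠ 0. -/

import Mathlib

open Matrix

noncomputable section

/-- The canonical index bijection `Fin (d-k) ⊕ Fin k ≃ Fin d` for `k ≤ d`. -/
def sumEquiv (d k : ℕ) (hdk : k ≤ d) : (Fin (d - k) ⊕ Fin k) ≃ Fin d :=
  finSumFinEquiv.trans (finCongr (Nat.sub_add_cancel hdk))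

/-- Jacobi-type lemma: for an invertible block matrix, if the top-left block is
nonsingular then the bottom-right block of the inverse is nonsingular. -/
private lemma jacobi_aux {m n : Type*} [Fintype m] [Fintype n] [DecidableEq m] [DecidableEq n]
    (P : Matrix (m ⊕ n) (m ⊕ n) ℝ) (hP : P.det ≠ 0)
    (h : (P.toBlocks₁₁).det ≠ 0) : ((P⁻¹).toBlocks₂₂).det ≠ 0 := by
  set A := P.toBlocks₁₁ with hA
  set B := P.toBlocks₁₂
  set C := P.toBlocks₂₁
  set Db := P.toBlocks₂₂
  have hPb : P = fromBlocks A B C Db := (fromBlocks_toBlocks P).symm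
  letI : Invertible A := A.invertibleOfIsUnitDet (isUnit_iff_ne_zero.mpr h)
  letI iP : Invertible P := P.invertibleOfIsUnitDet (isUnit_iff_ne_zero.mpr hP)
  letI iFB : Invertible (fromBlocks A B C Db) := iP.copy _ hPb.symm
  letI iS : Invertible (Db - C * ⅟A * B) := invertibleOfFromBlocks₁₁Invertible A B C Db
  have h1 : P⁻¹ = ⅟(fromBlocks A B C Db) := by
    rw [hPb]; exact (invOf_eq_nonsing_inv _).symm
  rw [h1, invOf_fromBlocks₁₁_eq]
  simp only [toBlocks_fromBlocks₂₂]
  exact (isUnit_det_of_invertible _).ne_zero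

/-- Mirror of `jacobi_aux`. -/
private lemma jacobi_aux2 {m n : Type*} [Fintype m] [Fintype n] [DecidableEq m] [DecidableEq n]
    (P : Matrix (m ⊕ n) (m ⊕ n) ℝ) (hP : P.det ≠ 0)
    (h : (P.toBlocks₂₂).det ≠ 0) : ((P⁻¹).toBlocks₁₁).det ≠ 0 := by
  set A := P.toBlocks₁₁
  set B := P.toBlocks₁₂
  set C := P.toBlocks₂₁
  set Db := P.toBlocks₂₂ with hDb
  have hPb : P = fromBlocks A B C Db := (fromBlocks_toBlocks P).symm
  letI : Invertible Db := Db.invertibleOfIsUnitDet (isUnit_iff_ne_zero.mpr h)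
  letI iP : Invertible P := P.invertibleOfIsUnitDet (isUnit_iff_ne_zero.mpr hP)
  letI iFB : Invertible (fromBlocks A B C Db) := iP.copy _ hPb.symm
  letI iS : Invertible (A - B * ⅟Db * C) := invertibleOfFromBlocks₂₂Invertible A B C Db
  have h1 : P⁻¹ = ⅟(fromBlocks A B C Db) := by
    rw [hPb]; exact (invOf_eq_nonsing_inv _).symm
  rw [h1, invOf_fromBlocks₂₂_eq]
  simp only [toBlocks_fromBlocks₁₁]
  exact (isUnit_det_of_invertible _).ne_zero

/-- **Lemma (equivalence of the two curvature conditions).** Let `H` be a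
`d × d` matrix with `det H ≠ 0`, `N` a `(d-k) × d` matrix and `D` a `k × d`
matrix with `N Dᵀ = 0`, such that the `d × d` matrix with columns
`[Nᵀ | Dᵀ]` is nonsingular. Then `det (N H Nᵀ) ≠ 0` if and only if
`det (D H⁻¹ Dᵀ) ≠ 0`. -/
theorem det_NHNt_ne_zero_iff_det_DHinvDt_ne_zero
    (d k : ℕ) (hdk : k ≤ d) (hk : 1 ≤ k)
    (H : Matrix (Fin d) (Fin d) ℝ) (hH : H.det ≠ 0)
    (N : Matrix (Fin (d - k)) (Fin d) ℝ) (D : Matrix (Fin k) (Fin d) ℝ)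
    (hND : N * Dᵀ = 0)
    (hfull : ((Matrix.fromCols Nᵀ Dᵀ).submatrix (id : Fin d → Fin d)
      (sumEquiv d k hdk).symm).det ≠ 0) :
    (N * H * Nᵀ).det ≠ 0 ↔ (D * H⁻¹ * Dᵀ).det ≠ 0 := by
  set e := sumEquiv d k hdk with he
  set Mh : Matrix (Fin d) (Fin d) ℝ :=
    ((fromCols Nᵀ Dᵀ).submatrix (id : Fin d → Fin d) ⇑e.symm)ᵀ with hMhdef
  have hMh : Mh.det ≠ 0 := by rw [hMhdef, det_transpose]; exact hfull
  have hMhT : Mhᵀ.det ≠ 0 := by rwa [det_transpose]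
  -- Reindexing facts
  have hMe : Mh.submatrix ⇑e (id : Fin d → Fin d) = fromRows N D := by
    ext i j
    cases i with
    | inl a => simp [hMhdef, fromCols, fromRows_apply_inl]
    | inr a => simp [hMhdef, fromCols, fromRows_apply_inr]
  have hMte : Mhᵀ.submatrix (id : Fin d → Fin d) ⇑e = fromCols Nᵀ Dᵀ := by
    have := congrArg Matrix.transpose hMe
    rw [transpose_submatrix, transpose_fromRows] at this
    exact this
  -- The key block computation
  have key : ∀ X : Matrix (Fin d) (Fin d) ℝ,
      (Mh * X * Mhᵀ).submatrix ⇑e ⇑e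
        = fromBlocks (N * X * Nᵀ) (N * X * Dᵀ) (D * X * Nᵀ) (D * X * Dᵀ) := by
    intro X
    have h1 : (Mh * X * Mhᵀ).submatrix ⇑e ⇑e
        = (Mh.submatrix ⇑e (id : Fin d → Fin d)) * X
          * (Mhᵀ.submatrix (id : Fin d → Fin d) ⇑e) := by
      ext i j
      simp [Matrix.mul_apply, Finset.sum_mul, Finset.mul_sum]
    rw [h1, hMe, hMte, fromRows_mul, fromRows_mul_fromCols]
  have m2 : ∀ X Y : Matrix (Fin d) (Fin d) ℝ,
      (X * Y).submatrix ⇑e ⇑e = X.submatrix ⇑e ⇑e * Y.submatrix ⇑e ⇑e :=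
    fun X Y => (submatrix_mul_equiv X Y ⇑e e ⇑e).symm
  -- P and its properties
  set P : Matrix (Fin d) (Fin d) ℝ := Mh * H * Mhᵀ with hPdef
  have hPdet : P.det ≠ 0 := by
    rw [hPdef, det_mul, det_mul]
    exact mul_ne_zero (mul_ne_zero hMh hH) hMhT
  set Pb := P.submatrix ⇑e ⇑e with hPbdef
  have hPbdet : Pb.det ≠ 0 := by rwa [hPbdef, det_submatrix_equiv_self]
  have hPb11 : Pb.toBlocks₁₁ = N * H * Nᵀ := by
    rw [hPbdef, hPdef, key H, toBlocks_fromBlocks₁₁]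
  have hinv : Pb⁻¹ = (P⁻¹).submatrix ⇑e ⇑e := inv_submatrix_equiv P e e
  -- D Dᵀ is nonsingular
  have hDN : D * Nᵀ = 0 := by
    have := congrArg Matrix.transpose hND
    rwa [transpose_mul, transpose_transpose, transpose_zero] at this
  have hSb : (Mh * Mhᵀ).submatrix ⇑e ⇑e = fromBlocks (N * Nᵀ) 0 0 (D * Dᵀ) := by
    have h := key 1
    simp only [Matrix.mul_one] at h
    rw [h, hND, hDN]
  have hSdet : (N * Nᵀ).det * (D * Dᵀ).det ≠ 0 := by
    have h1 : ((Mh * Mhᵀ).submatrix ⇑e ⇑e).det ≠ 0 := by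
      rw [det_submatrix_equiv_self, det_mul]
      exact mul_ne_zero hMh hMhT
    rwa [hSb, det_fromBlocks_zero₂₁] at h1
  have hDD : (D * Dᵀ).det ≠ 0 := fun h0 => hSdet (by rw [h0, mul_zero])
  -- The identity  Mh H⁻¹ Mhᵀ = S P⁻¹ S
  have hPinv : P⁻¹ = Mhᵀ⁻¹ * (H⁻¹ * Mh⁻¹) := by
    rw [hPdef, Matrix.mul_inv_rev, Matrix.mul_inv_rev]
  have hQ : (Mh * Mhᵀ) * P⁻¹ * (Mh * Mhᵀ) = Mh * H⁻¹ * Mhᵀ := by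
    rw [hPinv]
    simp only [← Matrix.mul_assoc]
    rw [mul_nonsing_inv_cancel_right _ _ (isUnit_iff_ne_zero.mpr hMhT),
      nonsing_inv_mul_cancel_right _ _ (isUnit_iff_ne_zero.mpr hMh)]
  -- Express D H⁻¹ Dᵀ via the bottom-right block of Pb⁻¹
  have hfinal : D * H⁻¹ * Dᵀ = (D * Dᵀ) * (Pb⁻¹).toBlocks₂₂ * (D * Dᵀ) := by
    have h2 := key H⁻¹
    rw [← hQ] at h2
    rw [m2, m2, hSb, ← hinv] at h2
    have h3 := congrArg Matrix.toBlocks₂₂ h2.symm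
    rw [toBlocks_fromBlocks₂₂] at h3
    rw [h3]
    conv_lhs => rw [← fromBlocks_toBlocks Pb⁻¹]
    simp [fromBlocks_multiply]
  have hdetfinal : (D * H⁻¹ * Dᵀ).det
      = (D * Dᵀ).det * ((Pb⁻¹).toBlocks₂₂).det * (D * Dᵀ).det := by
    rw [hfinal, det_mul, det_mul]
  constructor
  · intro hL
    have h1 : ((Pb⁻¹).toBlocks₂₂).det ≠ 0 := by
      apply jacobi_aux Pb hPbdet
      rwa [hPb11]
    rw [hdetfinal]
    exact mul_ne_zero (mul_ne_zero hDD h1) hDD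
  · intro hR
    have h1 : ((Pb⁻¹).toBlocks₂₂).det ≠ 0 := by
      intro h0
      rw [hdetfinal, h0, mul_zero, zero_mul] at hR
      exact hR rfl
    have hPbinvdet : (Pb⁻¹).det ≠ 0 := by
      rw [det_nonsing_inv, Ring.inverse_eq_inv']
      exact inv_ne_zero hPbdet
    have h2 := jacobi_aux2 Pb⁻¹ hPbinvdet h1
    rw [nonsing_inv_nonsing_inv Pb (isUnit_iff_ne_zero.mpr hPbdet), hPb11] at h2
    exact h2

end
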